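/- Let T be a triangulated category and E an object fitting into an exact triangle E →n E →n E →h ΣE for some integer n. If E is nonzero, then n ≡ 2 mod 4 and 4·1_E = 0. -/

import Mathlib

open CategoryTheory Limits Pretriangulated

/-- Let `T` be a triangulated category and `E` an object fitting into an exact triangle
`E →n E →n E →h ΣE` for an integer `n`.  If `E` is nonzero, then `n ≡ 2 mod 4` and
`4 · 1_E = 0`. -/
theorem stmt_9 {C : Type*} [Category C] [Preadditive C] [HasZeroObject C]
    [HasShift C ℤ] [∀ n : ℤ, (shiftFunctor C n).Additive] [Pretriangulated C]
    [IsTriangulated C]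
    (E : C) (n : ℤ) (h : E ⟶ E⟦(1 : ℤ)⟧)
    (hT : Triangle.mk (n • 𝟙 E) (n • 𝟙 E) h ∈ distTriang C)
    (hE : ¬ IsZero E) :
    n % 4 = 2 ∧ (4 : ℤ) • 𝟙 E = 0 := by
  set T : Triangle C := Triangle.mk (n • 𝟙 E) (n • 𝟙 E) h with hTdef
  -- (n*n) • 𝟙 E = 0
  have hsq : (n * n) • 𝟙 E = 0 := by
    have := comp_distTriang_mor_zero₁₂ _ hT
    change (n • 𝟙 E) ≫ (n • 𝟙 E) = 0 at this
    simpa [T, Preadditive.zsmul_comp, Preadditive.comp_zsmul, smul_smul] using this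
  -- 2 • h = 0
  have h2h : (2 : ℤ) • h = 0 := by
    obtain ⟨c, hc₁, hc₂⟩ := complete_distinguished_triangle_morphism T T.rotate hT
      (rot_of_distTriang _ hT) (𝟙 E) (𝟙 E) (by change (n • 𝟙 E) ≫ 𝟙 E = 𝟙 E ≫ (n • 𝟙 E); simp)
    change E ⟶ E⟦(1 : ℤ)⟧ at c
    have hc₁' : n • c = h := by
      change (n • 𝟙 E) ≫ c = 𝟙 E ≫ h at hc₁
      simpa [T, Preadditive.zsmul_comp] using hc₁
    have hc₂' : h = -(n • c) := by
      change h ≫ (shiftFunctor C 1).map (𝟙 E) = c ≫ (-(shiftFunctor C 1).map (n • 𝟙 E)) at hc₂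
      simpa [T, Functor.map_zsmul, Preadditive.comp_zsmul] using hc₂
    rw [two_zsmul]
    nth_rewrite 2 [hc₂']
    rw [hc₁']; exact add_neg_cancel _
  -- key exactness consequences
  have H3 : ∀ x : E ⟶ E, n • x = 0 → (2 : ℤ) • x = 0 := by
    intro x hx
    obtain ⟨g, hg⟩ := Triangle.yoneda_exact₃ T hT x
      (by change (n • 𝟙 E) ≫ x = 0; simpa [T, Preadditive.zsmul_comp] using hx)
    change E⟦(1 : ℤ)⟧ ⟶ E at g
    change x = h ≫ g at hg
    have : (2 : ℤ) • x = ((2 : ℤ) • h) ≫ g := by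
      rw [hg, Preadditive.zsmul_comp]
    rw [this, h2h, zero_comp]
  have H2 : ∀ x : E ⟶ E, n • x = 0 → ∃ y : E ⟶ E, x = n • y := by
    intro x hx
    obtain ⟨y, hy⟩ := Triangle.coyoneda_exact₂ T hT x
      (by change x ≫ (n • 𝟙 E) = 0; simpa [T, Preadditive.comp_zsmul] using hx)
    change E ⟶ E at y
    change x = y ≫ (n • 𝟙 E) at hy
    exact ⟨y, by simpa [T, Preadditive.comp_zsmul] using hy⟩
  -- 2n • 𝟙 = 0
  have h2n : (n * 2) • 𝟙 E = 0 := by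
    have := H3 (n • 𝟙 E) (by rw [smul_smul]; exact hsq)
    rw [smul_smul, mul_comm] at this
    exact this
  -- 4 • 𝟙 = 0
  have h4 : (4 : ℤ) • 𝟙 E = 0 := by
    have := H3 ((2 : ℤ) • 𝟙 E) (by rw [smul_smul]; exact h2n)
    rw [smul_smul] at this
    norm_num at this
    exact this
  refine ⟨?_, h4⟩
  -- if n • 𝟙 = 0 then E is zero, contradiction
  have hzero : n • 𝟙 E = 0 → False := by
    intro hn1
    obtain ⟨y, hy⟩ := H2 (𝟙 E) (by simpa using hn1)
    apply hE
    rw [IsZero.iff_id_eq_zero]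
    calc 𝟙 E = 𝟙 E ≫ 𝟙 E := by simp
      _ = (n • y) ≫ (n • y) := by rw [← hy]
      _ = ((n * n) • 𝟙 E) ≫ (y ≫ y) := by
          simp [Preadditive.zsmul_comp, Preadditive.comp_zsmul, smul_smul]
      _ = 0 := by rw [hsq, zero_comp]
  -- n is even
  have heven : n % 2 = 0 := by
    by_contra hodd
    obtain ⟨k, hk⟩ : ∃ k, n = 2 * k + 1 := ⟨n / 2, by omega⟩
    apply hzero
    calc n • 𝟙 E = (n * n) • 𝟙 E - (k * (n * 2)) • 𝟙 E := by
          rw [← sub_smul]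
          congr 1
          subst hk; ring
      _ = 0 - k • ((n * 2) • 𝟙 E) := by rw [hsq, mul_smul]
      _ = 0 := by rw [h2n, smul_zero, sub_zero]
  -- 4 does not divide n
  have h4n : ¬ (4 ∣ n) := by
    rintro ⟨m, rfl⟩
    have h2id : (2 : ℤ) • 𝟙 E = 0 := by
      obtain ⟨y, hy⟩ := H2 ((2 : ℤ) • 𝟙 E)
        (by rw [smul_smul]; exact h2n)
      rw [hy]
      calc (4 * m) • y = m • (((4 : ℤ) • 𝟙 E) ≫ y) := by
            simp [Preadditive.zsmul_comp, smul_smul, mul_comm]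
        _ = 0 := by rw [h4, zero_comp, smul_zero]
    apply hzero
    calc (4 * m) • 𝟙 E = (2 * m) • ((2 : ℤ) • 𝟙 E) := by rw [smul_smul]; ring_nf
      _ = 0 := by rw [h2id, smul_zero]
  omega
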